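/- Let X be an (n,k) right GOGAm trapezoid. The triangular array Y of size n defined by Y_{i,j} = X_{i,j} for i−j ≤ k−1 and Y_{i,j} = 1 for n ≥ i ≥ j+k is a GOGAm triangle, and it is the minimal GOGAm triangle extending X: every GOGAm triangle Z of size n whose restriction to the k rightmost SW-NE diagonals equals X satisfies Y ≤ Z entrywise. -/

import Mathlib

/-- A Gelfand-Tsetlin triangle of size `n`: a triangular array `X i j` for
`n ≥ i ≥ j ≥ 1` of positive integers with `X (i+1) j ≤ X i j ≤ X (i+1) (j+1)`. -/
def IsGT (n : ℕ) (X : ℕ → ℕ → ℕ) : Prop :=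
  (∀ i j, 1 ≤ j → j ≤ i → i ≤ n → 1 ≤ X i j) ∧
  (∀ i j, 1 ≤ j → j ≤ i → i + 1 ≤ n → X (i + 1) j ≤ X i j ∧ X i j ≤ X (i + 1) (j + 1))

/-- A GOGAm triangle of size `n`: a Gelfand-Tsetlin triangle with `X n n ≤ n` and,
for all `1 ≤ k ≤ n - 1` and all strictly decreasing sequences
`n = j 0 > j 1 > ⋯ > j (n - k) ≥ 1`,
`(∑ i in range (n-k), (X (j i + i) (j i) - X (j (i+1) + i) (j (i+1))))
  + X (j (n-k) + (n-k)) (j (n-k)) ≤ k`. -/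
def IsGOGAm (n : ℕ) (X : ℕ → ℕ → ℕ) : Prop :=
  IsGT n X ∧ X n n ≤ n ∧
  ∀ k : ℕ, 1 ≤ k → k ≤ n - 1 →
    ∀ j : ℕ → ℕ, j 0 = n → (∀ i, i < n - k → j (i + 1) < j i) → 1 ≤ j (n - k) →
      (∑ i ∈ Finset.range (n - k),
          ((X (j i + i) (j i) : ℤ) - (X (j (i + 1) + i) (j (i + 1)) : ℤ)))
        + (X (j (n - k) + (n - k)) (j (n - k)) : ℤ) ≤ (k : ℤ)

/-- Telescoping reshape of a GOGAm-type sum. -/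
lemma gogam_reshape (m : ℕ) (A B : ℕ → ℤ) :
    (∑ i ∈ Finset.range m, (A i - B i)) + A m
      = A 0 + ∑ i ∈ Finset.range m, (A (i + 1) - B i) := by
  induction m with
  | zero => simp
  | succ m ih =>
    rw [Finset.sum_range_succ, Finset.sum_range_succ]
    linarith

/-- Key abstract inequality for the minimal completion. -/
lemma gogam_key (m k : ℕ) (hk : 1 ≤ k) (AY BY AZ BZ : ℕ → ℤ) (c : ℤ)
    (h1 : ∀ i, i ≤ m → i < k → AY i = AZ i)
    (h2 : ∀ i, i < m → i < k → BY i = BZ i)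
    (h3 : ∀ i, i ≤ m → k ≤ i → AY i = 1)
    (h4 : ∀ i, i < m → k ≤ i → BY i = 1)
    (hZ1 : (∑ i ∈ Finset.range m, (AZ i - BZ i)) + AZ m ≤ c)
    (hZ2 : k ≤ m → (∑ i ∈ Finset.range k, (AZ i - BZ i)) + 1 ≤ c) :
    (∑ i ∈ Finset.range m, (AY i - BY i)) + AY m ≤ c := by
  rcases lt_or_ge m k with hc | hc
  · have e1 : ∑ i ∈ Finset.range m, (AY i - BY i)
        = ∑ i ∈ Finset.range m, (AZ i - BZ i) := by
      refine Finset.sum_congr rfl fun i hi => ?_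
      rw [Finset.mem_range] at hi
      rw [h1 i (by omega) (by omega), h2 i hi (by omega)]
    rw [e1, h1 m le_rfl hc]
    exact hZ1
  · have hZ2' := hZ2 hc
    rw [gogam_reshape m AY BY]
    have hsub : ∑ i ∈ Finset.range m, (AY (i + 1) - BY i)
        = ∑ i ∈ Finset.range k, (AY (i + 1) - BY i) := by
      symm
      refine Finset.sum_subset (Finset.range_subset_range.mpr hc) ?_
      intro i hi hik
      rw [Finset.mem_range] at hi
      simp only [Finset.mem_range, not_lt] at hik
      rw [h3 (i + 1) (by omega) (by omega), h4 i hi (by omega)]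
      ring
    rw [hsub]
    have ek : k = k - 1 + 1 := by omega
    rw [ek, Finset.sum_range_succ]
    rw [ek, Finset.sum_range_succ] at hZ2'
    have hcong : ∑ i ∈ Finset.range (k - 1), (AY (i + 1) - BY i)
        = ∑ i ∈ Finset.range (k - 1), (AZ (i + 1) - BZ i) := by
      refine Finset.sum_congr rfl fun i hi => ?_
      rw [Finset.mem_range] at hi
      rw [h1 (i + 1) (by omega) (by omega), h2 i (by omega) (by omega)]
    have e0 : AY 0 = AZ 0 := h1 0 (by omega) (by omega)
    have e5 : AY (k - 1 + 1) = 1 := h3 (k - 1 + 1) (by omega) (by omega)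
    have e6 : BY (k - 1) = BZ (k - 1) := h2 (k - 1) (by omega) (by omega)
    have hres := gogam_reshape (k - 1) AZ BZ
    rw [hcong, e0, e5, e6]
    linarith

/-- Let `X` be an `(n,k)` right GOGAm trapezoid (i.e. it agrees with some GOGAm
triangle of size `n` on the `k` rightmost SW-NE diagonals `i - j ≤ k - 1`). Then the
triangle `Y` with `Y i j = X i j` for `i < j + k` and `Y i j = 1` for `i ≥ j + k` is
a GOGAm triangle, and it is the minimal GOGAm triangle extending `X`. -/
theorem right_gogam_trapezoid_min_completion (n k : ℕ) (hk : 1 ≤ k) (hkn : k ≤ n)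
    (X : ℕ → ℕ → ℕ)
    (hX : ∃ Z, IsGOGAm n Z ∧
      ∀ i j, 1 ≤ j → j ≤ i → i ≤ n → i < j + k → X i j = Z i j) :
    IsGOGAm n (fun i j => if i < j + k then X i j else 1) ∧
    ∀ Z : ℕ → ℕ → ℕ, IsGOGAm n Z →
      (∀ i j, 1 ≤ j → j ≤ i → i ≤ n → i < j + k → Z i j = X i j) →
      ∀ i j, 1 ≤ j → j ≤ i → i ≤ n →
        (if i < j + k then X i j else 1) ≤ Z i j := by
  obtain ⟨Z, ⟨⟨hZpos, hZstep⟩, hZnn, hZsum⟩, hXZ⟩ := hX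
  have hYZ : ∀ i j, 1 ≤ j → j ≤ i → i ≤ n → i < j + k →
      (if i < j + k then X i j else 1) = Z i j := by
    intro i j h1 h2 h3 h4
    rw [if_pos h4]
    exact hXZ i j h1 h2 h3 h4
  have hYpos : ∀ i j, 1 ≤ j → j ≤ i → i ≤ n →
      1 ≤ (if i < j + k then X i j else 1) := by
    intro i j h1 h2 h3
    by_cases h4 : i < j + k
    · rw [hYZ i j h1 h2 h3 h4]; exact hZpos i j h1 h2 h3
    · rw [if_neg h4]
  refine ⟨⟨⟨hYpos, ?_⟩, ?_, ?_⟩, ?_⟩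
  · -- GT step conditions
    intro i j h1 h2 h3
    constructor
    · show (if i + 1 < j + k then X (i + 1) j else 1) ≤ (if i < j + k then X i j else 1)
      by_cases h4 : i + 1 < j + k
      · rw [hYZ (i + 1) j h1 (h2.trans (Nat.le_succ i)) h3 h4,
            hYZ i j h1 h2 (Nat.le_of_succ_le h3) (Nat.lt_of_succ_lt h4)]
        exact (hZstep i j h1 h2 h3).1
      · rw [if_neg h4]
        exact hYpos i j h1 h2 (Nat.le_of_succ_le h3)
    · show (if i < j + k then X i j else 1) ≤ (if i + 1 < j + 1 + k then X (i + 1) (j + 1) else 1)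
      by_cases h4 : i < j + k
      · rw [hYZ i j h1 h2 (Nat.le_of_succ_le h3) h4,
            hYZ (i + 1) (j + 1) (by omega) (by omega) h3 (by omega)]
        exact (hZstep i j h1 h2 h3).2
      · rw [if_neg h4, if_neg (by omega)]
  · -- Y n n ≤ n
    show (if n < n + k then X n n else 1) ≤ n
    rw [hYZ n n (by omega) le_rfl le_rfl (by omega)]
    exact hZnn
  · -- GOGAm sum inequality
    intro k' hk'1 hk'2 j hj0 hjdec hjm
    have hjn : ∀ i, i ≤ n - k' → j i + i ≤ n := by
      intro i
      induction i with
      | zero => intro _; omega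
      | succ i ih =>
        intro h
        have h1 := hjdec i (by omega)
        have h2 := ih (by omega)
        omega
    have hjd : ∀ d i, i + d ≤ n - k' → j (i + d) + d ≤ j i := by
      intro d
      induction d with
      | zero => intro i _; simp
      | succ d ih =>
        intro i h
        have h1 := ih i (by omega)
        have h2 := hjdec (i + d) (by omega)
        show j (i + d + 1) + (d + 1) ≤ j i
        omega
    have hjm' : ∀ i, i ≤ n - k' → 1 ≤ j i := by
      intro i h
      have h1 := hjd (n - k' - i) i (by omega)
      have h2 : i + (n - k' - i) = n - k' := by omega
      rw [h2] at h1
      omega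
    have H1 : ∀ i, i ≤ n - k' → i < k →
        ((if j i + i < j i + k then X (j i + i) (j i) else 1 : ℕ) : ℤ)
          = (Z (j i + i) (j i) : ℤ) := by
      intro i him hik
      have hcond : j i + i < j i + k := by omega
      have he := hXZ (j i + i) (j i) (hjm' i him) (Nat.le_add_right _ _) (hjn i him) hcond
      rw [if_pos hcond, he]
    have H2 : ∀ i, i < n - k' → i < k →
        ((if j (i + 1) + i < j (i + 1) + k then X (j (i + 1) + i) (j (i + 1)) else 1 : ℕ) : ℤ)
          = (Z (j (i + 1) + i) (j (i + 1)) : ℤ) := by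
      intro i him hik
      have hcond : j (i + 1) + i < j (i + 1) + k := by omega
      have hb := hjn (i + 1) (by omega)
      have he := hXZ (j (i + 1) + i) (j (i + 1)) (hjm' (i + 1) (by omega))
        (Nat.le_add_right _ _) (by omega) hcond
      rw [if_pos hcond, he]
    have H3 : ∀ i, i ≤ n - k' → k ≤ i →
        ((if j i + i < j i + k then X (j i + i) (j i) else 1 : ℕ) : ℤ) = 1 := by
      intro i him hik
      rw [if_neg (by omega)]
      norm_num
    have H4 : ∀ i, i < n - k' → k ≤ i →
        ((if j (i + 1) + i < j (i + 1) + k then X (j (i + 1) + i) (j (i + 1)) else 1 : ℕ) : ℤ)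
          = 1 := by
      intro i him hik
      rw [if_neg (by omega)]
      norm_num
    have HZ1 := hZsum k' hk'1 hk'2 j hj0 hjdec hjm
    have HZ2 : k ≤ n - k' →
        (∑ i ∈ Finset.range k,
            ((Z (j i + i) (j i) : ℤ) - (Z (j (i + 1) + i) (j (i + 1)) : ℤ)))
          + 1 ≤ (k' : ℤ) := by
      intro hkm
      -- extend `j` beyond index `k` by a strictly-decreasing-by-one tail
      obtain ⟨j', hj'1, hj'2⟩ : ∃ j' : ℕ → ℕ, (∀ i, i ≤ k → j' i = j i) ∧
          (∀ i, k ≤ i → j' i = j k - (i - k)) := by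
        refine ⟨fun i => if i ≤ k then j i else j k - (i - k), fun i h => if_pos h, ?_⟩
        intro i h
        by_cases h2 : i ≤ k
        · have : i = k := le_antisymm h2 h
          subst this
          simp
        · exact if_neg h2
      have hgap : j (n - k') + (n - k' - k) ≤ j k := by
        have h1 := hjd (n - k' - k) k (by omega)
        rw [show k + (n - k' - k) = n - k' from by omega] at h1
        exact h1
      have hjkn := hjn k hkm
      have hj'0 : j' 0 = n := by rw [hj'1 0 (by omega)]; exact hj0
      have hj'dec : ∀ i, i < n - k' → j' (i + 1) < j' i := by
        intro i hi
        by_cases h : i + 1 ≤ k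
        · rw [hj'1 (i + 1) h, hj'1 i (by omega)]
          exact hjdec i hi
        · rw [hj'2 (i + 1) (by omega), hj'2 i (by omega)]
          omega
      have hj'm : 1 ≤ j' (n - k') := by
        rw [hj'2 (n - k') hkm]
        omega
      have h := hZsum k' hk'1 hk'2 j' hj'0 hj'dec hj'm
      have hsplit : (∑ i ∈ Finset.range (n - k'),
            ((Z (j' i + i) (j' i) : ℤ) - (Z (j' (i + 1) + i) (j' (i + 1)) : ℤ)))
          = (∑ i ∈ Finset.range k,
              ((Z (j' i + i) (j' i) : ℤ) - (Z (j' (i + 1) + i) (j' (i + 1)) : ℤ)))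
            + ∑ i ∈ Finset.Ico k (n - k'),
              ((Z (j' i + i) (j' i) : ℤ) - (Z (j' (i + 1) + i) (j' (i + 1)) : ℤ)) := by
        rw [Finset.range_eq_Ico, Finset.range_eq_Ico]
        exact (Finset.sum_Ico_consecutive _ (Nat.zero_le k) hkm).symm
      have hcongk : (∑ i ∈ Finset.range k,
            ((Z (j' i + i) (j' i) : ℤ) - (Z (j' (i + 1) + i) (j' (i + 1)) : ℤ)))
          = ∑ i ∈ Finset.range k,
              ((Z (j i + i) (j i) : ℤ) - (Z (j (i + 1) + i) (j (i + 1)) : ℤ)) := by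
        refine Finset.sum_congr rfl fun i hi => ?_
        rw [Finset.mem_range] at hi
        rw [hj'1 i (by omega), hj'1 (i + 1) (by omega)]
      have htail : 0 ≤ ∑ i ∈ Finset.Ico k (n - k'),
          ((Z (j' i + i) (j' i) : ℤ) - (Z (j' (i + 1) + i) (j' (i + 1)) : ℤ)) := by
        refine Finset.sum_nonneg fun i hi => ?_
        rw [Finset.mem_Ico] at hi
        have e1 : j' i = j k - (i - k) := hj'2 i hi.1
        have e2 : j' (i + 1) = j k - (i + 1 - k) := hj'2 (i + 1) (by omega)
        have hc0 : 1 ≤ j' (i + 1) := by omega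
        have e3 : j' i = j' (i + 1) + 1 := by omega
        have e4 : j' i + i = j' (i + 1) + i + 1 := by omega
        have hstep := (hZstep (j' (i + 1) + i) (j' (i + 1)) hc0 (Nat.le_add_right _ _)
          (by omega)).2
        rw [e4, e3]
        omega
      have hlast : (1 : ℤ) ≤ (Z (j' (n - k') + (n - k')) (j' (n - k')) : ℤ) := by
        have hb : j' (n - k') + (n - k') ≤ n := by
          have e := hj'2 (n - k') hkm
          omega
        exact_mod_cast hZpos _ _ hj'm (Nat.le_add_right _ _) hb
      rw [hsplit, hcongk] at h
      linarith
    exact gogam_key (n - k') k hk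
      (fun i => ((if j i + i < j i + k then X (j i + i) (j i) else 1 : ℕ) : ℤ))
      (fun i => ((if j (i + 1) + i < j (i + 1) + k then X (j (i + 1) + i) (j (i + 1)) else 1 : ℕ) : ℤ))
      (fun i => (Z (j i + i) (j i) : ℤ))
      (fun i => (Z (j (i + 1) + i) (j (i + 1)) : ℤ))
      (k' : ℤ) H1 H2 H3 H4 HZ1 HZ2
  · -- minimality
    intro Z' hZ' hZ'X i j h1 h2 h3
    by_cases h4 : i < j + k
    · rw [if_pos h4, ← hZ'X i j h1 h2 h3 h4]
    · rw [if_neg h4]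
      exact hZ'.1.1 i j h1 h2 h3
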